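/- There exists a universal constant η > 0, independent of the dimension, such that for every d ≥ 1, if X is uniformly distributed on the closed unit Euclidean ball of ℝ^d, then X is √(η/d)-subgaussian; that is, for all θ ∈ ℝ^d, E[exp⟨θ, X⟩] ≤ exp((η/d)·‖θ‖²/2) (note that E X = 0). -/

import Mathlib

open MeasureTheory Real Set Metric
open scoped ENNReal

local notation "⟪" x ", " y "⟫" => @inner ℝ _ _ x y

private lemma sqrt_one_sub_le_exp {b : ℝ} :
    Real.sqrt (1 - b) ≤ Real.exp (-(b / 2)) := by
  have h : (1 : ℝ) - b ≤ Real.exp (-b) := by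
    have := Real.add_one_le_exp (-b); linarith
  have h2 : Real.exp (-(b / 2)) ^ 2 = Real.exp (-b) := by
    rw [sq, ← Real.exp_add]; ring_nf
  calc Real.sqrt (1 - b) ≤ Real.sqrt (Real.exp (-b)) := Real.sqrt_le_sqrt h
    _ = Real.exp (-(b / 2)) := by rw [← h2, Real.sqrt_sq (Real.exp_nonneg _)]

private lemma sinh_le_self_mul_exp (s : ℝ) : Real.sinh s ≤ s * Real.exp s := by
  rw [Real.sinh_eq]
  have h := Real.add_one_le_exp (-(2 * s))
  have hAB : Real.exp s * Real.exp (-s) = 1 := by rw [← Real.exp_add]; simp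
  have hB2 : Real.exp (-s) ^ 2 = Real.exp (-(2 * s)) := by
    rw [sq, ← Real.exp_add]; ring_nf
  nlinarith [Real.exp_pos s, Real.exp_pos (-s), mul_pos (Real.exp_pos s) (Real.exp_pos (-s))]

private lemma scalar_ineq {a : ℝ} (ha : 0 < a) :
    1 + 2 * Real.exp (a / 2) * (a + 3 * (a * Real.sqrt a)) ≤ Real.exp (5 * a) := by
  have hs : Real.sqrt a ≤ (1 + a) / 2 := by
    nlinarith [Real.sq_sqrt ha.le, Real.sqrt_nonneg a, sq_nonneg (Real.sqrt a - 1)]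
  set u := Real.exp (a / 2) - 1 with hu
  have hue : Real.exp (a / 2) = 1 + u := by rw [hu]; ring
  have h1 : a / 2 + 1 ≤ Real.exp (a / 2) := Real.add_one_le_exp _
  have hu0 : 0 ≤ u := by rw [hu]; linarith
  have hau : a ≤ 2 * u := by rw [hu]; linarith
  have hexp : Real.exp (5 * a) = (1 + u) ^ 10 := by
    rw [← hue, ← Real.exp_nat_mul]
    congr 1
    push_cast
    ring
  rw [hexp, hue]
  have hg1 : a + 3 * (a * Real.sqrt a) ≤ (5 * a + 3 * a ^ 2) / 2 := by
    nlinarith [mul_le_mul_of_nonneg_left hs ha.le]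
  have hg2 : 5 * a + 3 * a ^ 2 ≤ 10 * u + 12 * u ^ 2 := by nlinarith
  have hstep : 2 * (1 + u) * (a + 3 * (a * Real.sqrt a)) ≤ (1 + u) * (10 * u + 12 * u ^ 2) := by
    have h3 : 2 * (a + 3 * (a * Real.sqrt a)) ≤ 10 * u + 12 * u ^ 2 := by linarith
    have h4 : (0:ℝ) ≤ 1 + u := by linarith
    nlinarith [mul_le_mul_of_nonneg_left h3 h4]
  have hfin : 1 + (1 + u) * (10 * u + 12 * u ^ 2) ≤ (1 + u) ^ 10 := by
    nlinarith [pow_nonneg hu0 2, pow_nonneg hu0 3, pow_nonneg hu0 4, pow_nonneg hu0 5,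
      pow_nonneg hu0 6, pow_nonneg hu0 7, pow_nonneg hu0 8, pow_nonneg hu0 9,
      pow_nonneg hu0 10, hu0]
  linarith

private lemma cap_vol_le {d : ℕ} (θ : EuclideanSpace ℝ (Fin d)) {s : ℝ}
    (hs : 0 < s) (hst : s ≤ ‖θ‖) :
    volume ({x : EuclideanSpace ℝ (Fin d) | s < ⟪θ, x⟫} ∩ closedBall 0 1)
      ≤ ENNReal.ofReal (Real.exp (-((d : ℝ) * s ^ 2 / (2 * ‖θ‖ ^ 2))))
        * volume (closedBall (0 : EuclideanSpace ℝ (Fin d)) 1) := by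
  have ht : 0 < ‖θ‖ := lt_of_lt_of_le hs hst
  set t := ‖θ‖ with htdef
  set b : ℝ := s ^ 2 / t ^ 2 with hb
  have hb0 : 0 ≤ b := by positivity
  have hb1 : b ≤ 1 := by
    rw [hb, div_le_one (by positivity)]
    exact pow_le_pow_left₀ hs.le hst 2
  set c : EuclideanSpace ℝ (Fin d) := (s / t ^ 2) • θ with hc
  set r : ℝ := Real.sqrt (1 - b) with hr
  have hr0 : 0 ≤ r := Real.sqrt_nonneg _
  have hsubset : {x : EuclideanSpace ℝ (Fin d) | s < ⟪θ, x⟫} ∩ closedBall 0 1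
      ⊆ closedBall c r := by
    rintro x ⟨hx1, hx2⟩
    simp only [Set.mem_setOf_eq] at hx1
    rw [Metric.mem_closedBall, dist_eq_norm] at hx2 ⊢
    rw [sub_zero] at hx2
    have hx2' : ‖x‖ ^ 2 ≤ 1 := by nlinarith [norm_nonneg x]
    have hexp : ‖x - c‖ ^ 2 = ‖x‖ ^ 2 - 2 * ⟪x, c⟫ + ‖c‖ ^ 2 := norm_sub_sq_real x c
    have hic : ⟪x, c⟫ = s / t ^ 2 * ⟪θ, x⟫ := by
      rw [hc, real_inner_smul_right, real_inner_comm]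
    have hcn : ‖c‖ ^ 2 = s ^ 2 / t ^ 2 := by
      rw [hc, norm_smul, Real.norm_eq_abs, abs_of_nonneg (by positivity : (0:ℝ) ≤ s / t ^ 2),
        mul_pow, ← htdef]
      field_simp
    have hxc : ‖x - c‖ ^ 2 ≤ 1 - b := by
      rw [hexp, hic, hcn, hb]
      have hcoef : 0 < s / t ^ 2 := by positivity
      have hkey : s / t ^ 2 * s ≤ s / t ^ 2 * ⟪θ, x⟫ :=
        mul_le_mul_of_nonneg_left hx1.le hcoef.le
      have hkey2 : s / t ^ 2 * s = s ^ 2 / t ^ 2 := by ring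
      linarith
    have : ‖x - c‖ ≤ r := by
      rw [hr]
      have := Real.sqrt_le_sqrt hxc
      rwa [Real.sqrt_sq (norm_nonneg _)] at this
    exact this
  calc volume ({x : EuclideanSpace ℝ (Fin d) | s < ⟪θ, x⟫} ∩ closedBall 0 1)
      ≤ volume (closedBall c r) := measure_mono hsubset
    _ = ENNReal.ofReal (r ^ Module.finrank ℝ (EuclideanSpace ℝ (Fin d)))
          * volume (closedBall (0 : EuclideanSpace ℝ (Fin d)) 1) :=
        Measure.addHaar_closedBall' volume c hr0
    _ ≤ ENNReal.ofReal (Real.exp (-((d : ℝ) * s ^ 2 / (2 * t ^ 2))))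
          * volume (closedBall (0 : EuclideanSpace ℝ (Fin d)) 1) := by
        apply mul_le_mul_left
        apply ENNReal.ofReal_le_ofReal
        rw [finrank_euclideanSpace_fin]
        calc r ^ d ≤ Real.exp (-(b / 2)) ^ d :=
              pow_le_pow_left₀ hr0 sqrt_one_sub_le_exp d
          _ = Real.exp (-((d : ℝ) * s ^ 2 / (2 * t ^ 2))) := by
              rw [← Real.exp_nat_mul, hb]
              congr 1
              ring

set_option maxHeartbeats 2000000 in
theorem uniform_ball_subgaussian :
    ∃ η : ℝ, 0 < η ∧
      ∀ (d : ℕ), 1 ≤ d →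
        ∀ θ : EuclideanSpace ℝ (Fin d),
          ∫ x, Real.exp ((inner ℝ θ x : ℝ))
              ∂(((volume (Metric.closedBall (0 : EuclideanSpace ℝ (Fin d)) 1))⁻¹)
                  • volume.restrict (Metric.closedBall (0 : EuclideanSpace ℝ (Fin d)) 1))
            ≤ Real.exp ((η / d) * ‖θ‖ ^ 2 / 2) := by
  classical
  refine ⟨10, by norm_num, ?_⟩
  intro d hd θ
  set B : Set (EuclideanSpace ℝ (Fin d)) := Metric.closedBall 0 1 with hB
  have hBm : MeasurableSet B := hB ▸ measurableSet_closedBall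
  set V : ℝ≥0∞ := volume B with hV
  have hV0 : V ≠ 0 := by
    rw [hV, hB]
    exact (measure_closedBall_pos volume _ one_pos).ne'
  have hVtop : V ≠ ⊤ := by
    rw [hV, hB]
    exact measure_closedBall_lt_top.ne
  set P : Measure (EuclideanSpace ℝ (Fin d)) := V⁻¹ • volume.restrict B with hP
  have hprob : IsProbabilityMeasure P := by
    constructor
    rw [hP, Measure.smul_apply, Measure.restrict_apply_univ, smul_eq_mul, ← hV,
      ENNReal.inv_mul_cancel hV0 hVtop]
  have hcont : Continuous fun x : EuclideanSpace ℝ (Fin d) => (⟪θ, x⟫ : ℝ) :=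
    continuous_const.inner continuous_id
  have hintegrable : ∀ f : ℝ → ℝ, Continuous f →
      Integrable (fun x => f ⟪θ, x⟫) P := by
    intro f hf
    have h1 : IntegrableOn (fun x => f ⟪θ, x⟫) B volume :=
      (hf.comp hcont).continuousOn.integrableOn_compact (hB ▸ isCompact_closedBall 0 1)
    exact h1.smul_measure (ENNReal.inv_ne_top.mpr hV0)
  have hd0 : (0 : ℝ) < d := by exact_mod_cast hd
  by_cases hθ : θ = 0
  · subst hθ
    simp only [inner_zero_left, Real.exp_zero, norm_zero]
    rw [integral_const]
    simp [Real.exp_nonneg]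
  -- main case
  have ht : 0 < ‖θ‖ := norm_pos_iff.mpr hθ
  set t : ℝ := ‖θ‖ with htd
  set a : ℝ := t ^ 2 / d with had
  have ha : 0 < a := by positivity
  -- the RHS
  have hRHS : (10 / (d:ℝ)) * t ^ 2 / 2 = 5 * a := by
    rw [had]; field_simp; ring
  -- split exp = cosh + sinh
  have hsplit : ∫ x, Real.exp ⟪θ, x⟫ ∂P
      = ∫ x, Real.cosh ⟪θ, x⟫ ∂P + ∫ x, Real.sinh ⟪θ, x⟫ ∂P := by
    rw [← integral_add (hintegrable _ Real.continuous_cosh) (hintegrable _ Real.continuous_sinh)]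
    congr 1
    funext x
    rw [Real.cosh_add_sinh]
  -- sinh integral vanishes by symmetry
  have hneg : Measure.map (fun x : EuclideanSpace ℝ (Fin d) => -x) P = P := by
    have h1 : MeasurePreserving (fun x : EuclideanSpace ℝ (Fin d) => -x) volume volume := by
      have := (LinearIsometryEquiv.neg ℝ (E := EuclideanSpace ℝ (Fin d))).measurePreserving
      simpa using this
    have hBneg : (fun x : EuclideanSpace ℝ (Fin d) => -x) ⁻¹' B = B := by
      ext x
      simp [hB, Metric.mem_closedBall, dist_eq_norm]
    rw [hP, Measure.map_smul]
    congr 1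
    calc Measure.map (fun x : EuclideanSpace ℝ (Fin d) => -x) (volume.restrict B)
        = Measure.map (fun x : EuclideanSpace ℝ (Fin d) => -x)
            (volume.restrict ((fun x : EuclideanSpace ℝ (Fin d) => -x) ⁻¹' B)) := by
          rw [hBneg]
      _ = (Measure.map (fun x : EuclideanSpace ℝ (Fin d) => -x) volume).restrict B :=
          (Measure.restrict_map h1.measurable hBm).symm
      _ = volume.restrict B := by rw [h1.map_eq]
  have hsinh : ∫ x, Real.sinh ⟪θ, x⟫ ∂P = 0 := by
    have hm : AEStronglyMeasurable (fun x : EuclideanSpace ℝ (Fin d) => Real.sinh ⟪θ, x⟫) P :=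
      (Real.continuous_sinh.comp hcont).aestronglyMeasurable
    have h1 : ∫ x, Real.sinh ⟪θ, x⟫ ∂P
        = ∫ x, Real.sinh ⟪θ, -x⟫ ∂P := by
      conv_lhs => rw [← hneg]
      rw [integral_map measurable_neg.aemeasurable (hneg.symm ▸ hm)]
    simp only [inner_neg_right, Real.sinh_neg] at h1
    rw [integral_neg] at h1
    linarith
  -- cosh part
  set g : EuclideanSpace ℝ (Fin d) → ℝ := fun x => |⟪θ, x⟫| with hgdef
  set W : ℝ := ∫ x, (Real.cosh (g x) - 1) ∂P with hW
  have hcosh_int : Integrable (fun x => Real.cosh (g x)) P := by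
    have := hintegrable _ Real.continuous_cosh
    simpa [hgdef, Real.cosh_abs] using this
  have hcosh_eq : ∫ x, Real.cosh ⟪θ, x⟫ ∂P = 1 + W := by
    have h2 : W = ∫ x, Real.cosh (g x) ∂P - 1 := by
      rw [hW, integral_sub hcosh_int (integrable_const 1), integral_const]
      simp
    have h3 : ∫ x, Real.cosh ⟪θ, x⟫ ∂P = ∫ x, Real.cosh (g x) ∂P := by
      congr 1
      funext x
      rw [hgdef, Real.cosh_abs]
    rw [h3]
    linarith
  -- layer cake
  have hgm : AEMeasurable g P := hcont.abs.aemeasurable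
  have hgnn : 0 ≤ᵐ[P] g := Filter.Eventually.of_forall fun x => abs_nonneg _
  have hlayer := lintegral_comp_eq_lintegral_meas_lt_mul P hgnn hgm
    (fun t' _ => Real.continuous_sinh.intervalIntegrable 0 t')
    (by
      filter_upwards [ae_restrict_mem measurableSet_Ioi] with s hs
      exact Real.sinh_nonneg_iff.mpr (le_of_lt hs))
  have hftc : ∀ y : ℝ, ∫ s in (0:ℝ)..y, Real.sinh s = Real.cosh y - 1 := by
    intro y
    rw [intervalIntegral.integral_eq_sub_of_hasDerivAt
      (fun s _ => Real.hasDerivAt_cosh s)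
      (Real.continuous_sinh.intervalIntegrable 0 y), Real.cosh_zero]
  have hWL : W = (∫⁻ s in Ioi (0:ℝ),
      P {x | s < g x} * ENNReal.ofReal (Real.sinh s)).toReal := by
    rw [hW, integral_eq_lintegral_of_nonneg_ae
      (Filter.Eventually.of_forall fun x => sub_nonneg.mpr (Real.one_le_cosh _))
      ((Real.continuous_cosh.comp hcont.abs).sub continuous_const).aestronglyMeasurable]
    rw [← hlayer]
    congr 1
    apply lintegral_congr
    intro x
    rw [hftc (g x)]
  -- tail bounds
  have htail : ∀ s : ℝ, 0 < s → s ≤ t →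
      P {x | s < g x} ≤ ENNReal.ofReal (2 * Real.exp (-((d:ℝ) * s ^ 2 / (2 * t ^ 2)))) := by
    intro s hs hst
    have hPa : P {x | s < g x} = V⁻¹ * volume ({x | s < g x} ∩ B) := by
      rw [hP, Measure.smul_apply, Measure.restrict_apply' hBm, smul_eq_mul]
    have hsub : {x : EuclideanSpace ℝ (Fin d) | s < g x} ∩ B
        ⊆ ({x : EuclideanSpace ℝ (Fin d) | s < ⟪θ, x⟫} ∩ B)
          ∪ ({x : EuclideanSpace ℝ (Fin d) | s < ⟪-θ, x⟫} ∩ B) := by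
      rintro x ⟨hx1, hx2⟩
      simp only [Set.mem_setOf_eq, hgdef] at hx1
      rcases lt_abs.mp hx1 with h | h
      · exact Or.inl ⟨h, hx2⟩
      · exact Or.inr ⟨by simpa [inner_neg_left] using h, hx2⟩
    have hcap1 := cap_vol_le θ hs hst
    have hcap2 : volume ({x : EuclideanSpace ℝ (Fin d) | s < ⟪-θ, x⟫} ∩ closedBall 0 1)
        ≤ ENNReal.ofReal (Real.exp (-((d : ℝ) * s ^ 2 / (2 * t ^ 2))))
          * volume (closedBall (0 : EuclideanSpace ℝ (Fin d)) 1) := by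
      have := cap_vol_le (-θ) hs (by rwa [norm_neg])
      simpa [norm_neg] using this
    set Ex : ℝ≥0∞ := ENNReal.ofReal (Real.exp (-((d:ℝ) * s ^ 2 / (2 * t ^ 2)))) with hEx
    have hvol : volume ({x : EuclideanSpace ℝ (Fin d) | s < g x} ∩ B) ≤ 2 * (Ex * V) := by
      calc volume ({x : EuclideanSpace ℝ (Fin d) | s < g x} ∩ B)
          ≤ volume (({x : EuclideanSpace ℝ (Fin d) | s < ⟪θ, x⟫} ∩ B)
              ∪ ({x : EuclideanSpace ℝ (Fin d) | s < ⟪-θ, x⟫} ∩ B)) := measure_mono hsub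
        _ ≤ volume ({x : EuclideanSpace ℝ (Fin d) | s < ⟪θ, x⟫} ∩ B)
              + volume ({x : EuclideanSpace ℝ (Fin d) | s < ⟪-θ, x⟫} ∩ B) :=
            measure_union_le _ _
        _ ≤ Ex * V + Ex * V := by
            rw [hV, hB]
            exact add_le_add hcap1 hcap2
        _ = 2 * (Ex * V) := by rw [two_mul]
    calc P {x | s < g x} = V⁻¹ * volume ({x | s < g x} ∩ B) := hPa
      _ ≤ V⁻¹ * (2 * (Ex * V)) := mul_le_mul_right hvol _
      _ = 2 * Ex * (V⁻¹ * V) := by ring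
      _ = 2 * Ex := by rw [ENNReal.inv_mul_cancel hV0 hVtop, mul_one]
      _ = ENNReal.ofReal (2 * Real.exp (-((d:ℝ) * s ^ 2 / (2 * t ^ 2)))) := by
          rw [hEx, ENNReal.ofReal_mul (by norm_num : (0:ℝ) ≤ 2)]
          congr 1
          norm_num
  have htail0 : ∀ s : ℝ, t < s → P {x | s < g x} = 0 := by
    intro s hs
    have hempty : {x : EuclideanSpace ℝ (Fin d) | s < g x} ∩ B = ∅ := by
      ext x
      simp only [Set.mem_inter_iff, Set.mem_setOf_eq, Set.mem_empty_iff_false, iff_false,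
        not_and]
      intro h1 h2
      have hxn : ‖x‖ ≤ 1 := by
        rw [hB] at h2
        simpa [Metric.mem_closedBall, dist_eq_norm] using h2
      have habs : |⟪θ, x⟫| ≤ t := by
        calc |⟪θ, x⟫| ≤ ‖θ‖ * ‖x‖ := abs_real_inner_le_norm θ x
          _ ≤ t * 1 := by
              rw [← htd]
              exact mul_le_mul_of_nonneg_left hxn ht.le
          _ = t := mul_one t
      rw [hgdef] at h1
      simp only at h1
      linarith
    rw [hP, Measure.smul_apply, Measure.restrict_apply' hBm, hempty]
    simp
  -- bound the tail integral
  set F : ℝ → ℝ := fun s => 2 * Real.exp (-((d:ℝ) * s ^ 2 / (2 * t ^ 2))) * Real.sinh s with hF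
  have hFcont : Continuous F := by
    rw [hF]
    fun_prop
  have hFint : IntegrableOn F (Ioc (0:ℝ) t) volume := hFcont.integrableOn_Ioc
  have hFnn : ∀ s ∈ Ioc (0:ℝ) t, 0 ≤ F s := by
    intro s hs
    have := Real.sinh_nonneg_iff.mpr hs.1.le
    rw [hF]
    positivity
  have hLle : (∫⁻ s in Ioi (0:ℝ), P {x | s < g x} * ENNReal.ofReal (Real.sinh s))
      ≤ ENNReal.ofReal (∫ s in Ioc (0:ℝ) t, F s) := by
    have hmono : (∫⁻ s in Ioi (0:ℝ), P {x | s < g x} * ENNReal.ofReal (Real.sinh s))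
        ≤ ∫⁻ s in Ioi (0:ℝ), ENNReal.ofReal ((Ioc (0:ℝ) t).indicator F s) := by
      apply lintegral_mono_ae
      rw [ae_restrict_iff' measurableSet_Ioi]
      apply Filter.Eventually.of_forall
      intro s hs
      rcases le_or_gt s t with h | h
      · have hmem : s ∈ Ioc (0:ℝ) t := ⟨hs, h⟩
        rw [Set.indicator_of_mem hmem F]
        calc P {x | s < g x} * ENNReal.ofReal (Real.sinh s)
            ≤ ENNReal.ofReal (2 * Real.exp (-((d:ℝ) * s ^ 2 / (2 * t ^ 2))))
                * ENNReal.ofReal (Real.sinh s) := mul_le_mul_left (htail s hs h) _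
          _ = ENNReal.ofReal (F s) := by
              simp only [hF]
              rw [← ENNReal.ofReal_mul (by positivity)]
      · rw [htail0 s h, zero_mul]
        exact zero_le
    have heq1 : (∫⁻ s in Ioi (0:ℝ), ENNReal.ofReal ((Ioc (0:ℝ) t).indicator F s))
        = ∫⁻ s in Ioc (0:ℝ) t, ENNReal.ofReal (F s) := by
      have hswap : ∀ s, ENNReal.ofReal ((Ioc (0:ℝ) t).indicator F s)
          = (Ioc (0:ℝ) t).indicator (fun s => ENNReal.ofReal (F s)) s := by
        intro s
        by_cases hm : s ∈ Ioc (0:ℝ) t <;> simp [hm]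
      simp_rw [hswap]
      rw [lintegral_indicator measurableSet_Ioc, Measure.restrict_restrict measurableSet_Ioc,
        Set.inter_eq_self_of_subset_left Set.Ioc_subset_Ioi_self]
    have heq2 : ENNReal.ofReal (∫ s in Ioc (0:ℝ) t, F s)
        = ∫⁻ s in Ioc (0:ℝ) t, ENNReal.ofReal (F s) := by
      apply ofReal_integral_eq_lintegral_ofReal hFint
      filter_upwards [ae_restrict_mem measurableSet_Ioc] with s hs
      exact hFnn s hs
    rw [heq2, ← heq1]
    exact hmono
  have hWle : W ≤ ∫ s in Ioc (0:ℝ) t, F s := by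
    rw [hWL]
    exact ENNReal.toReal_le_of_le_ofReal
      (setIntegral_nonneg measurableSet_Ioc hFnn) hLle
  -- real estimates
  set G : ℝ → ℝ := fun s => 2 * Real.exp (a / 2) * (s * Real.exp (-((s - a) ^ 2 / (2 * a)))) with hG
  have hGcont : Continuous G := by
    rw [hG]
    fun_prop
  have hFG : ∀ s ∈ Ioc (0:ℝ) t, F s ≤ G s := by
    intro s hs
    have hse : (d:ℝ) * s ^ 2 / (2 * t ^ 2) = s ^ 2 / (2 * a) := by
      rw [had]
      field_simp
    have hexpid : Real.exp (-(s ^ 2 / (2 * a))) * Real.exp s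
        = Real.exp (a / 2) * Real.exp (-((s - a) ^ 2 / (2 * a))) := by
      rw [← Real.exp_add, ← Real.exp_add]
      congr 1
      field_simp
      ring
    have hsinh : Real.sinh s ≤ s * Real.exp s := sinh_le_self_mul_exp s
    have he : (0:ℝ) < Real.exp (-(s ^ 2 / (2 * a))) := Real.exp_pos _
    calc F s = 2 * Real.exp (-(s ^ 2 / (2 * a))) * Real.sinh s := by
          simp only [hF]
          rw [hse]
      _ ≤ 2 * Real.exp (-(s ^ 2 / (2 * a))) * (s * Real.exp s) := by
          apply mul_le_mul_of_nonneg_left hsinh (by positivity)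
      _ = G s := by
          simp only [hG]
          rw [show 2 * Real.exp (-(s ^ 2 / (2 * a))) * (s * Real.exp s)
              = 2 * s * (Real.exp (-(s ^ 2 / (2 * a))) * Real.exp s) by ring, hexpid]
          ring
  have hstep1 : ∫ s in Ioc (0:ℝ) t, F s ≤ ∫ s in Ioc (0:ℝ) t, G s :=
    setIntegral_mono_on hFint hGcont.integrableOn_Ioc measurableSet_Ioc hFG
  -- evaluate/bound ∫ G
  have hT1 : ∫ s in Ioc (0:ℝ) t, (s - a) * Real.exp (-((s - a) ^ 2 / (2 * a))) ≤ a := by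
    rw [← intervalIntegral.integral_of_le ht.le]
    have hderiv : ∀ s ∈ Set.uIcc (0:ℝ) t,
        HasDerivAt (fun s : ℝ => -a * Real.exp (-((s - a) ^ 2 / (2 * a))))
          ((s - a) * Real.exp (-((s - a) ^ 2 / (2 * a)))) s := by
      intro s _
      have h1 : HasDerivAt (fun s : ℝ => s - a) 1 s := (hasDerivAt_id s).sub_const a
      have h2 : HasDerivAt (fun s : ℝ => (s - a) ^ 2) (2 * (s - a)) s := by
        have := h1.fun_pow 2
        simpa using this
      have h3 : HasDerivAt (fun s : ℝ => -((s - a) ^ 2 / (2 * a)))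
          (-(2 * (s - a) / (2 * a))) s := (h2.div_const (2 * a)).neg
      have h4 := h3.exp
      have h5 := h4.const_mul (-a)
      refine h5.congr_deriv ?_
      field_simp
    rw [intervalIntegral.integral_eq_sub_of_hasDerivAt hderiv
      ((by fun_prop : Continuous fun s : ℝ => (s - a) * Real.exp (-((s - a) ^ 2 / (2 * a)))).intervalIntegrable 0 t)]
    have e1 : Real.exp (-((0 - a) ^ 2 / (2 * a))) ≤ 1 := by
      apply Real.exp_le_one_iff.mpr
      have : (0 - a) ^ 2 / (2 * a) ≥ 0 := by positivity
      linarith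
    have e2 : 0 < Real.exp (-((t - a) ^ 2 / (2 * a))) := Real.exp_pos _
    nlinarith
  have hT2 : ∫ s in Ioc (0:ℝ) t, Real.exp (-((s - a) ^ 2 / (2 * a))) ≤ 3 * Real.sqrt a := by
    have hgauss_int : Integrable (fun u : ℝ => Real.exp (-(1 / (2 * a)) * u ^ 2)) volume :=
      integrable_exp_neg_mul_sq (by positivity)
    have hshift : Integrable (fun s : ℝ => Real.exp (-((s - a) ^ 2 / (2 * a)))) volume := by
      have h2 := hgauss_int.comp_sub_right a
      refine h2.congr (Filter.Eventually.of_forall fun s => ?_)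
      simp only
      congr 1
      field_simp
    calc ∫ s in Ioc (0:ℝ) t, Real.exp (-((s - a) ^ 2 / (2 * a)))
        ≤ ∫ s : ℝ, Real.exp (-((s - a) ^ 2 / (2 * a))) :=
          setIntegral_le_integral hshift
            (Filter.Eventually.of_forall fun s => (Real.exp_pos _).le)
      _ = ∫ s : ℝ, Real.exp (-(1 / (2 * a)) * s ^ 2) := by
          rw [← integral_sub_right_eq_self (fun u : ℝ => Real.exp (-(1 / (2 * a)) * u ^ 2)) a]
          congr 1
          funext s
          congr 1
          field_simp
      _ = Real.sqrt (π / (1 / (2 * a))) := integral_gaussian _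
      _ ≤ 3 * Real.sqrt a := by
          have hpa : π / (1 / (2 * a)) = 2 * π * a := by field_simp
          rw [hpa]
          have h9 : 2 * π * a ≤ 9 * a := by nlinarith [Real.pi_le_four]
          calc Real.sqrt (2 * π * a) ≤ Real.sqrt (9 * a) := Real.sqrt_le_sqrt h9
            _ = 3 * Real.sqrt a := by
                rw [show (9:ℝ) * a = 3 ^ 2 * a by norm_num, Real.sqrt_mul (by positivity),
                  Real.sqrt_sq (by norm_num : (0:ℝ) ≤ 3)]
  have hGsplit : ∫ s in Ioc (0:ℝ) t, G s
      = 2 * Real.exp (a / 2) * ((∫ s in Ioc (0:ℝ) t, (s - a) * Real.exp (-((s - a) ^ 2 / (2 * a))))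
          + a * ∫ s in Ioc (0:ℝ) t, Real.exp (-((s - a) ^ 2 / (2 * a)))) := by
    have hi1 : IntegrableOn (fun s : ℝ => (s - a) * Real.exp (-((s - a) ^ 2 / (2 * a))))
        (Ioc 0 t) volume :=
      (by fun_prop : Continuous fun s : ℝ => (s - a) * Real.exp (-((s - a) ^ 2 / (2 * a)))).integrableOn_Ioc
    have hi2 : IntegrableOn (fun s : ℝ => Real.exp (-((s - a) ^ 2 / (2 * a))))
        (Ioc 0 t) volume :=
      (by fun_prop : Continuous fun s : ℝ => Real.exp (-((s - a) ^ 2 / (2 * a)))).integrableOn_Ioc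
    have heq : ∀ s : ℝ, G s = 2 * Real.exp (a / 2) * ((s - a) * Real.exp (-((s - a) ^ 2 / (2 * a)))
        + a * Real.exp (-((s - a) ^ 2 / (2 * a)))) := by
      intro s
      simp only [hG]
      ring
    simp_rw [heq]
    rw [integral_const_mul, integral_add hi1 (hi2.const_mul a), integral_const_mul]
  have hGle : ∫ s in Ioc (0:ℝ) t, G s ≤ 2 * Real.exp (a / 2) * (a + 3 * (a * Real.sqrt a)) := by
    rw [hGsplit]
    apply mul_le_mul_of_nonneg_left _ (by positivity)
    have := mul_le_mul_of_nonneg_left hT2 ha.le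
    calc (∫ s in Ioc (0:ℝ) t, (s - a) * Real.exp (-((s - a) ^ 2 / (2 * a))))
          + a * ∫ s in Ioc (0:ℝ) t, Real.exp (-((s - a) ^ 2 / (2 * a)))
        ≤ a + a * (3 * Real.sqrt a) := add_le_add hT1 this
      _ = a + 3 * (a * Real.sqrt a) := by ring
  -- put it all together
  calc ∫ x, Real.exp ⟪θ, x⟫ ∂P = (1 + W) + 0 := by rw [hsplit, hcosh_eq, hsinh]
    _ = 1 + W := by ring
    _ ≤ 1 + 2 * Real.exp (a / 2) * (a + 3 * (a * Real.sqrt a)) := by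
        have : W ≤ 2 * Real.exp (a / 2) * (a + 3 * (a * Real.sqrt a)) :=
          le_trans hWle (le_trans hstep1 hGle)
        linarith
    _ ≤ Real.exp (5 * a) := scalar_ineq ha
    _ = Real.exp (10 / ↑d * t ^ 2 / 2) := by rw [hRHS]
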